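/- Let A₁, A₂, A₃, A₄ be real constants with A₁² ≠ A₂², and define Γ₁(t) = (3A₁A₂cos(A₃-A₄)/|A₁²-A₂²|) sgn(t)(e^{-|A₁²-A₂²||t|/3} - 1) and Γ₂(t) = (3A₁A₂sin(A₃-A₄)/(A₁²-A₂²)) e^{-|A₁²-A₂²||t|/3}. Then on any interval not containing 0, the functions q₁ = -(A₁²/3)t + Γ₁, q₂ = -(A₂²/3)t + Γ₁, p₁ = A₁sin(Γ₂+A₃), p₂ = A₂sin(Γ₂+A₄), r₁ = A₁cos(Γ₂+A₃), r₂ = A₂cos(Γ₂+A₄) solve the complex two-peakon dynamical system. -/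

import Mathlib

lemma peakon_abs_deriv (t : ℝ) (ht : t ≠ 0) : HasDerivAt (fun x : ℝ => |x|) (Real.sign t) t := by
  rcases ht.lt_or_gt with h | h
  · rw [Real.sign_of_neg h]; exact hasDerivAt_abs_neg h
  · rw [Real.sign_of_pos h]; exact hasDerivAt_abs_pos h

lemma peakon_exp_deriv (c t : ℝ) (ht : t ≠ 0) :
    HasDerivAt (fun x : ℝ => Real.exp (-c * |x| / 3))
      (Real.exp (-c * |t| / 3) * (-c * Real.sign t / 3)) t := by
  exact (((peakon_abs_deriv t ht).const_mul (-c)).div_const 3).exp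

lemma peakon_Gamma2_deriv (A₁ A₂ A₃ A₄ t : ℝ) (ht : t ≠ 0) (hA : A₁ ^ 2 ≠ A₂ ^ 2) :
    HasDerivAt (fun t : ℝ => (3 * A₁ * A₂ * Real.sin (A₃ - A₄) / (A₁ ^ 2 - A₂ ^ 2)) *
        Real.exp (-|A₁ ^ 2 - A₂ ^ 2| * |t| / 3))
      (-(Real.sign (A₁ ^ 2 - A₂ ^ 2) * Real.sign t * (A₁ * A₂ * Real.sin (A₃ - A₄)) *
        Real.exp (-|A₁ ^ 2 - A₂ ^ 2| * |t| / 3))) t := by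
  have hD : A₁ ^ 2 - A₂ ^ 2 ≠ 0 := sub_ne_zero.mpr hA
  have h := (peakon_exp_deriv (|A₁ ^ 2 - A₂ ^ 2|) t ht).const_mul
    (3 * A₁ * A₂ * Real.sin (A₃ - A₄) / (A₁ ^ 2 - A₂ ^ 2))
  refine h.congr_deriv (Eq.symm ?_)
  rcases hD.lt_or_gt with h' | h'
  · rw [abs_of_neg h', Real.sign_of_neg h']; field_simp
  · rw [abs_of_pos h', Real.sign_of_pos h']; field_simp

lemma peakon_Gamma1_deriv (A₁ A₂ A₃ A₄ t : ℝ) (ht : t ≠ 0) (hA : A₁ ^ 2 ≠ A₂ ^ 2) :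
    HasDerivAt (fun t : ℝ => (3 * A₁ * A₂ * Real.cos (A₃ - A₄) / |A₁ ^ 2 - A₂ ^ 2|) * Real.sign t *
        (Real.exp (-|A₁ ^ 2 - A₂ ^ 2| * |t| / 3) - 1))
      (-(A₁ * A₂ * Real.cos (A₃ - A₄) * Real.exp (-|A₁ ^ 2 - A₂ ^ 2| * |t| / 3))) t := by
  have hD : A₁ ^ 2 - A₂ ^ 2 ≠ 0 := sub_ne_zero.mpr hA
  have hc : |A₁ ^ 2 - A₂ ^ 2| ≠ 0 := abs_ne_zero.mpr hD
  set M := 3 * A₁ * A₂ * Real.cos (A₃ - A₄) / |A₁ ^ 2 - A₂ ^ 2| with hM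
  have key : ∀ s : ℝ, Real.sign t = s →
      HasDerivAt (fun x : ℝ => M * s * (Real.exp (-|A₁ ^ 2 - A₂ ^ 2| * |x| / 3) - 1))
        (-(A₁ * A₂ * Real.cos (A₃ - A₄) * Real.exp (-|A₁ ^ 2 - A₂ ^ 2| * |t| / 3))) t := by
    intro s hs
    have h := (((peakon_exp_deriv (|A₁ ^ 2 - A₂ ^ 2|) t ht).sub_const 1).const_mul (M * s))
    refine h.congr_deriv (Eq.symm ?_)
    have hss : Real.sign t * Real.sign t = 1 := by
      rcases ht.lt_or_gt with h' | h'
      · rw [Real.sign_of_neg h']; ring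
      · rw [Real.sign_of_pos h']; ring
    rw [hs] at hss
    rw [hs, hM]
    field_simp
    rcases hD.lt_or_gt with h' | h'
    · linear_combination (A₁ * A₂ * Real.cos (A₃ - A₄)) * hss
    · linear_combination (A₁ * A₂ * Real.cos (A₃ - A₄)) * hss
  rcases ht.lt_or_gt with h' | h'
  · refine (key (-1) (Real.sign_of_neg h')).congr_of_eventuallyEq ?_
    filter_upwards [eventually_lt_nhds h'] with x hx
    rw [Real.sign_of_neg hx]
  · refine (key 1 (Real.sign_of_pos h')).congr_of_eventuallyEq ?_
    filter_upwards [eventually_gt_nhds h'] with x hx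
    rw [Real.sign_of_pos hx]

lemma peakon_sign_abs (D t : ℝ) (hD : D ≠ 0) (ht : t ≠ 0) :
    Real.sign (-(D * t / 3)) = -(Real.sign D * Real.sign t) ∧
    Real.sign (D * t / 3) = Real.sign D * Real.sign t ∧
    |(-(D * t / 3))| = |D| * |t| / 3 := by
  refine ⟨?_, ?_, ?_⟩
  · rcases hD.lt_or_gt with h1 | h1 <;> rcases ht.lt_or_gt with h2 | h2
    · rw [Real.sign_of_neg h1, Real.sign_of_neg h2,
        Real.sign_of_neg (by nlinarith : -(D * t / 3) < 0)]; ring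
    · rw [Real.sign_of_neg h1, Real.sign_of_pos h2,
        Real.sign_of_pos (by nlinarith : 0 < -(D * t / 3))]; ring
    · rw [Real.sign_of_pos h1, Real.sign_of_neg h2,
        Real.sign_of_pos (by nlinarith : 0 < -(D * t / 3))]; ring
    · rw [Real.sign_of_pos h1, Real.sign_of_pos h2,
        Real.sign_of_neg (by nlinarith : -(D * t / 3) < 0)]; ring
  · rcases hD.lt_or_gt with h1 | h1 <;> rcases ht.lt_or_gt with h2 | h2
    · rw [Real.sign_of_neg h1, Real.sign_of_neg h2,
        Real.sign_of_pos (by nlinarith : 0 < D * t / 3)]; ring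
    · rw [Real.sign_of_neg h1, Real.sign_of_pos h2,
        Real.sign_of_neg (by nlinarith : D * t / 3 < 0)]; ring
    · rw [Real.sign_of_pos h1, Real.sign_of_neg h2,
        Real.sign_of_neg (by nlinarith : D * t / 3 < 0)]; ring
    · rw [Real.sign_of_pos h1, Real.sign_of_pos h2,
        Real.sign_of_pos (by nlinarith : 0 < D * t / 3)]; ring
  · rw [abs_neg, abs_div, abs_mul]; norm_num


noncomputable section

/-- The explicit functions built from `Γ₁`, `Γ₂` solve the complex two-peakon dynamical
system away from the collision time `t = 0`, for real constants `A₁, …, A₄` with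
`A₁² ≠ A₂²`. -/
theorem complex_two_peakon_explicit_solution (A₁ A₂ A₃ A₄ : ℝ) (hA : A₁ ^ 2 ≠ A₂ ^ 2) :
    let Γ₁ : ℝ → ℝ := fun t =>
      (3 * A₁ * A₂ * Real.cos (A₃ - A₄) / |A₁ ^ 2 - A₂ ^ 2|) * Real.sign t *
        (Real.exp (-|A₁ ^ 2 - A₂ ^ 2| * |t| / 3) - 1)
    let Γ₂ : ℝ → ℝ := fun t =>
      (3 * A₁ * A₂ * Real.sin (A₃ - A₄) / (A₁ ^ 2 - A₂ ^ 2)) *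
        Real.exp (-|A₁ ^ 2 - A₂ ^ 2| * |t| / 3)
    let p : Fin 2 → ℝ → ℝ :=
      ![fun t => A₁ * Real.sin (Γ₂ t + A₃), fun t => A₂ * Real.sin (Γ₂ t + A₄)]
    let r : Fin 2 → ℝ → ℝ :=
      ![fun t => A₁ * Real.cos (Γ₂ t + A₃), fun t => A₂ * Real.cos (Γ₂ t + A₄)]
    let q : Fin 2 → ℝ → ℝ :=
      ![fun t => -(A₁ ^ 2 / 3) * t + Γ₁ t, fun t => -(A₂ ^ 2 / 3) * t + Γ₁ t]
    ∀ (j : Fin 2) (t : ℝ), t ≠ 0 →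
      HasDerivAt (p j)
        (r j t * ∑ l : Fin 2, ∑ k : Fin 2, p l t * r k t *
          (Real.sign (q j t - q k t) - Real.sign (q j t - q l t)) *
          Real.exp (-|q j t - q k t| - |q j t - q l t|)) t ∧
      HasDerivAt (r j)
        (p j t * ∑ l : Fin 2, ∑ k : Fin 2, p l t * r k t *
          (Real.sign (q j t - q l t) - Real.sign (q j t - q k t)) *
          Real.exp (-|q j t - q k t| - |q j t - q l t|)) t ∧
      HasDerivAt (q j)
        ((1 / 6) * ((p j t) ^ 2 + (r j t) ^ 2)
          - (1 / 2) * ∑ l : Fin 2, ∑ k : Fin 2, (p l t * p k t + r l t * r k t) *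
            (1 - Real.sign (q j t - q l t) * Real.sign (q j t - q k t)) *
            Real.exp (-|q j t - q l t| - |q j t - q k t|)) t := by
  intro Γ₁ Γ₂ p r q j t ht
  have hD : A₁ ^ 2 - A₂ ^ 2 ≠ 0 := sub_ne_zero.mpr hA
  have hΓ₂ : HasDerivAt Γ₂
      (-(Real.sign (A₁ ^ 2 - A₂ ^ 2) * Real.sign t * (A₁ * A₂ * Real.sin (A₃ - A₄)) *
        Real.exp (-|A₁ ^ 2 - A₂ ^ 2| * |t| / 3))) t := peakon_Gamma2_deriv A₁ A₂ A₃ A₄ t ht hA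
  have hΓ₁ : HasDerivAt Γ₁
      (-(A₁ * A₂ * Real.cos (A₃ - A₄) * Real.exp (-|A₁ ^ 2 - A₂ ^ 2| * |t| / 3))) t :=
    peakon_Gamma1_deriv A₁ A₂ A₃ A₄ t ht hA
  obtain ⟨hs1, hs2, hab⟩ := peakon_sign_abs (A₁ ^ 2 - A₂ ^ 2) t hD ht
  have e01 : (-(A₁ ^ 2 / 3) * t + Γ₁ t) - (-(A₂ ^ 2 / 3) * t + Γ₁ t)
      = -((A₁ ^ 2 - A₂ ^ 2) * t / 3) := by ring
  have e10 : (-(A₂ ^ 2 / 3) * t + Γ₁ t) - (-(A₁ ^ 2 / 3) * t + Γ₁ t)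
      = (A₁ ^ 2 - A₂ ^ 2) * t / 3 := by ring
  have hab' : |(A₁ ^ 2 - A₂ ^ 2) * t / 3| = |A₁ ^ 2 - A₂ ^ 2| * |t| / 3 := by
    rw [← abs_neg]; exact hab
  have hss : Real.sign t * Real.sign t = 1 := by
    rcases ht.lt_or_gt with h' | h'
    · rw [Real.sign_of_neg h']; ring
    · rw [Real.sign_of_pos h']; ring
  have hDD : Real.sign (A₁ ^ 2 - A₂ ^ 2) * Real.sign (A₁ ^ 2 - A₂ ^ 2) = 1 := by
    rcases hD.lt_or_gt with h' | h'
    · rw [Real.sign_of_neg h']; ring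
    · rw [Real.sign_of_pos h']; ring
  have hsin : Real.sin (Γ₂ t + A₃) * Real.cos (Γ₂ t + A₄)
      - Real.cos (Γ₂ t + A₃) * Real.sin (Γ₂ t + A₄) = Real.sin (A₃ - A₄) := by
    rw [← Real.sin_sub]; ring_nf
  have hcos : Real.cos (Γ₂ t + A₃) * Real.cos (Γ₂ t + A₄)
      + Real.sin (Γ₂ t + A₃) * Real.sin (Γ₂ t + A₄) = Real.cos (A₃ - A₄) := by
    rw [← Real.cos_sub]; ring_nf
  have hpy3 := Real.sin_sq_add_cos_sq (Γ₂ t + A₃)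
  have hpy4 := Real.sin_sq_add_cos_sq (Γ₂ t + A₄)
  fin_cases j
  · refine ⟨?_, ?_, ?_⟩
    · have h := ((hΓ₂.add_const A₃).sin).const_mul A₁
      refine h.congr_deriv (Eq.symm ?_)
      simp only [p, r, q, Fin.mk_zero, Fin.mk_one, Fin.isValue, Fin.sum_univ_two,
        Matrix.cons_val_zero, Matrix.cons_val_one, Matrix.head_cons]
      simp only [sub_self, Real.sign_zero, abs_zero, neg_zero, e01, e10, hs1, hs2, hab, hab',
        Real.exp_zero, mul_zero, zero_mul, mul_one, one_mul, sub_zero, zero_sub, add_zero,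
        zero_add, neg_neg]
      rw [show -(|A₁ ^ 2 - A₂ ^ 2| * |t| / 3) = -|A₁ ^ 2 - A₂ ^ 2| * |t| / 3 from by ring]
      linear_combination (-(A₁ ^ 2 * A₂ * Real.sign (A₁ ^ 2 - A₂ ^ 2) * Real.sign t * Real.exp (-|A₁ ^ 2 - A₂ ^ 2| * |t| / 3) * Real.cos (Γ₂ t + A₃))) * hsin
    · have h := (((hΓ₂.add_const A₃).cos).const_mul A₁)
      refine h.congr_deriv (Eq.symm ?_)
      simp only [p, r, q, Fin.mk_zero, Fin.mk_one, Fin.isValue, Fin.sum_univ_two,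
        Matrix.cons_val_zero, Matrix.cons_val_one, Matrix.head_cons]
      simp only [sub_self, Real.sign_zero, abs_zero, neg_zero, e01, e10, hs1, hs2, hab, hab',
        Real.exp_zero, mul_zero, zero_mul, mul_one, one_mul, sub_zero, zero_sub, add_zero,
        zero_add, neg_neg]
      rw [show -(|A₁ ^ 2 - A₂ ^ 2| * |t| / 3) = -|A₁ ^ 2 - A₂ ^ 2| * |t| / 3 from by ring]
      linear_combination (A₁ ^ 2 * A₂ * Real.sign (A₁ ^ 2 - A₂ ^ 2) * Real.sign t * Real.exp (-|A₁ ^ 2 - A₂ ^ 2| * |t| / 3) * Real.sin (Γ₂ t + A₃)) * hsin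
    · have h := ((hasDerivAt_id t).const_mul (-(A₁ ^ 2 / 3))).add hΓ₁
      refine h.congr_deriv (Eq.symm ?_)
      simp only [p, r, q, Fin.mk_zero, Fin.mk_one, Fin.isValue, Fin.sum_univ_two,
        Matrix.cons_val_zero, Matrix.cons_val_one, Matrix.head_cons]
      simp only [sub_self, Real.sign_zero, abs_zero, neg_zero, e01, e10, hs1, hs2, hab, hab',
        Real.exp_zero, mul_zero, zero_mul, mul_one, one_mul, sub_zero, zero_sub, add_zero,
        zero_add, neg_neg]
      rw [show -(|A₁ ^ 2 - A₂ ^ 2| * |t| / 3) = -|A₁ ^ 2 - A₂ ^ 2| * |t| / 3 from by ring]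
      linear_combination (-(A₁ ^ 2 / 3)) * hpy3 + (-(A₁ * A₂ * Real.exp (-|A₁ ^ 2 - A₂ ^ 2| * |t| / 3))) * hcos + ((1/2) * A₂ ^ 2 * (Real.sin (Γ₂ t + A₄) ^ 2 + Real.cos (Γ₂ t + A₄) ^ 2) * Real.exp (-|A₁ ^ 2 - A₂ ^ 2| * |t| / 3 - |A₁ ^ 2 - A₂ ^ 2| * |t| / 3) * (Real.sign (A₁ ^ 2 - A₂ ^ 2) * Real.sign (A₁ ^ 2 - A₂ ^ 2))) * hss + ((1/2) * A₂ ^ 2 * (Real.sin (Γ₂ t + A₄) ^ 2 + Real.cos (Γ₂ t + A₄) ^ 2) * Real.exp (-|A₁ ^ 2 - A₂ ^ 2| * |t| / 3 - |A₁ ^ 2 - A₂ ^ 2| * |t| / 3)) * hDD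
  · refine ⟨?_, ?_, ?_⟩
    · have h := ((hΓ₂.add_const A₄).sin).const_mul A₂
      refine h.congr_deriv (Eq.symm ?_)
      simp only [p, r, q, Fin.mk_zero, Fin.mk_one, Fin.isValue, Fin.sum_univ_two,
        Matrix.cons_val_zero, Matrix.cons_val_one, Matrix.head_cons]
      simp only [sub_self, Real.sign_zero, abs_zero, neg_zero, e01, e10, hs1, hs2, hab, hab',
        Real.exp_zero, mul_zero, zero_mul, mul_one, one_mul, sub_zero, zero_sub, add_zero,
        zero_add, neg_neg]
      rw [show -(|A₁ ^ 2 - A₂ ^ 2| * |t| / 3) = -|A₁ ^ 2 - A₂ ^ 2| * |t| / 3 from by ring]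
      linear_combination (-(A₁ * A₂ ^ 2 * Real.sign (A₁ ^ 2 - A₂ ^ 2) * Real.sign t * Real.exp (-|A₁ ^ 2 - A₂ ^ 2| * |t| / 3) * Real.cos (Γ₂ t + A₄))) * hsin
    · have h := (((hΓ₂.add_const A₄).cos).const_mul A₂)
      refine h.congr_deriv (Eq.symm ?_)
      simp only [p, r, q, Fin.mk_zero, Fin.mk_one, Fin.isValue, Fin.sum_univ_two,
        Matrix.cons_val_zero, Matrix.cons_val_one, Matrix.head_cons]
      simp only [sub_self, Real.sign_zero, abs_zero, neg_zero, e01, e10, hs1, hs2, hab, hab',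
        Real.exp_zero, mul_zero, zero_mul, mul_one, one_mul, sub_zero, zero_sub, add_zero,
        zero_add, neg_neg]
      rw [show -(|A₁ ^ 2 - A₂ ^ 2| * |t| / 3) = -|A₁ ^ 2 - A₂ ^ 2| * |t| / 3 from by ring]
      linear_combination (A₁ * A₂ ^ 2 * Real.sign (A₁ ^ 2 - A₂ ^ 2) * Real.sign t * Real.exp (-|A₁ ^ 2 - A₂ ^ 2| * |t| / 3) * Real.sin (Γ₂ t + A₄)) * hsin
    · have h := ((hasDerivAt_id t).const_mul (-(A₂ ^ 2 / 3))).add hΓ₁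
      refine h.congr_deriv (Eq.symm ?_)
      simp only [p, r, q, Fin.mk_zero, Fin.mk_one, Fin.isValue, Fin.sum_univ_two,
        Matrix.cons_val_zero, Matrix.cons_val_one, Matrix.head_cons]
      simp only [sub_self, Real.sign_zero, abs_zero, neg_zero, e01, e10, hs1, hs2, hab, hab',
        Real.exp_zero, mul_zero, zero_mul, mul_one, one_mul, sub_zero, zero_sub, add_zero,
        zero_add, neg_neg]
      rw [show -(|A₁ ^ 2 - A₂ ^ 2| * |t| / 3) = -|A₁ ^ 2 - A₂ ^ 2| * |t| / 3 from by ring]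
      linear_combination (-(A₂ ^ 2 / 3)) * hpy4 + (-(A₁ * A₂ * Real.exp (-|A₁ ^ 2 - A₂ ^ 2| * |t| / 3))) * hcos + ((1/2) * A₁ ^ 2 * (Real.sin (Γ₂ t + A₃) ^ 2 + Real.cos (Γ₂ t + A₃) ^ 2) * Real.exp (-|A₁ ^ 2 - A₂ ^ 2| * |t| / 3 - |A₁ ^ 2 - A₂ ^ 2| * |t| / 3) * (Real.sign (A₁ ^ 2 - A₂ ^ 2) * Real.sign (A₁ ^ 2 - A₂ ^ 2))) * hss + ((1/2) * A₁ ^ 2 * (Real.sin (Γ₂ t + A₃) ^ 2 + Real.cos (Γ₂ t + A₃) ^ 2) * Real.exp (-|A₁ ^ 2 - A₂ ^ 2| * |t| / 3 - |A₁ ^ 2 - A₂ ^ 2| * |t| / 3)) * hDD
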